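/- For all natural numbers d and m and every real x ≥ 0 with d·x ≤ 1, one has 0 ≤ (1+x)^d − Σ_{i=0}^{m} C(d,i)·x^i ≤ e·(d·x)^{m+1}/(m+1)!. -/
import Mathlib

open Finset

theorem binom_series_tail_bound (d m : ℕ) (x : ℝ) (hx : 0 ≤ x) (hdx : (d : ℝ) * x ≤ 1) :
    0 ≤ (1 + x) ^ d - ∑ i ∈ Finset.range (m + 1), (d.choose i : ℝ) * x ^ i ∧
    (1 + x) ^ d - ∑ i ∈ Finset.range (m + 1), (d.choose i : ℝ) * x ^ i ≤
      Real.exp 1 * ((d : ℝ) * x) ^ (m + 1) / (m + 1).factorial := by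
  set t : ℝ := (d : ℝ) * x with ht
  have hto : 0 ≤ t := mul_nonneg (Nat.cast_nonneg d) hx
  set N : ℕ := max m d with hN
  have hb : (1 + x) ^ d = ∑ i ∈ Finset.range (N + 1), (d.choose i : ℝ) * x ^ i := by
    rw [add_comm, add_pow]
    simp only [one_pow, mul_one]
    rw [Finset.sum_subset (Finset.range_subset_range.2 (by omega : d + 1 ≤ N + 1))]
    · exact Finset.sum_congr rfl fun i _ => mul_comm _ _
    · intro i _ hi
      have : d < i := by simp at hi; omega
      simp [Nat.choose_eq_zero_of_lt this]
  have hdiff : (1 + x) ^ d - ∑ i ∈ Finset.range (m + 1), (d.choose i : ℝ) * x ^ i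
      = ∑ i ∈ Finset.Ico (m + 1) (N + 1), (d.choose i : ℝ) * x ^ i := by
    rw [hb, Finset.sum_Ico_eq_sub _ (by omega : m + 1 ≤ N + 1)]
  have hterm : ∀ i, (d.choose i : ℝ) * x ^ i ≤ t ^ i / (i.factorial : ℝ) := by
    intro i
    have h1 : (d.choose i : ℝ) ≤ ((d : ℝ) ^ i) / (i.factorial : ℝ) :=
      Nat.choose_le_pow_div i d
    calc (d.choose i : ℝ) * x ^ i ≤ ((d : ℝ) ^ i / i.factorial) * x ^ i :=
          mul_le_mul_of_nonneg_right h1 (pow_nonneg hx i)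
      _ = t ^ i / i.factorial := by rw [ht, mul_pow]; ring
  constructor
  · rw [hdiff]
    exact Finset.sum_nonneg fun i _ =>
      mul_nonneg (Nat.cast_nonneg _) (pow_nonneg hx i)
  · rw [hdiff]
    have h2 : ∑ i ∈ Finset.Ico (m + 1) (N + 1), (d.choose i : ℝ) * x ^ i
        ≤ ∑ i ∈ Finset.Ico (m + 1) (N + 1), t ^ i / (i.factorial : ℝ) :=
      Finset.sum_le_sum fun i _ => hterm i
    refine h2.trans ?_
    rw [Finset.sum_Ico_eq_sum_range]
    have h3 : ∀ j, t ^ (m + 1 + j) / ((m + 1 + j).factorial : ℝ)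
        ≤ t ^ (m + 1) / (m + 1).factorial * (t ^ j / j.factorial) := by
      intro j
      have hfac : ((m + 1).factorial * j.factorial : ℝ) ≤ ((m + 1 + j).factorial : ℝ) := by
        exact_mod_cast Nat.le_of_dvd (Nat.factorial_pos _)
          (Nat.factorial_mul_factorial_dvd_factorial_add (m + 1) j)
      rw [pow_add, div_mul_div_comm]
      apply div_le_div_of_nonneg_left (by positivity) (by positivity) hfac
    calc ∑ j ∈ Finset.range (N + 1 - (m + 1)), t ^ (m + 1 + j) / ((m + 1 + j).factorial : ℝ)
        ≤ ∑ j ∈ Finset.range (N + 1 - (m + 1)),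
            t ^ (m + 1) / (m + 1).factorial * (t ^ j / j.factorial) :=
          Finset.sum_le_sum fun j _ => h3 j
      _ = t ^ (m + 1) / (m + 1).factorial *
            ∑ j ∈ Finset.range (N + 1 - (m + 1)), t ^ j / j.factorial := by
          rw [Finset.mul_sum]
      _ ≤ t ^ (m + 1) / (m + 1).factorial * Real.exp 1 := by
          apply mul_le_mul_of_nonneg_left _ (by positivity)
          exact (Real.sum_le_exp_of_nonneg hto _).trans (Real.exp_le_exp.2 hdx)
      _ = Real.exp 1 * t ^ (m + 1) / (m + 1).factorial := by ring
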